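/- Let P(x) = ∏_{j=1}^d (x - α_j) be a monic real polynomial of degree d ≥ 1 with P(0) = 1 and no zeros in [0,1]. Then ∫_0^∞ log(P(e^{-x})) dx = -∑_{j=1}^d Li₂(1/α_j). -/

import Mathlib

/-- The dilogarithm on `ℂ \ [1,∞)`, via `Li₂(z) = -∫₀^z log(1-u)/u du`
parametrized along the straight segment from `0` to `z`. -/
noncomputable def dilogC (z : ℂ) : ℂ := -∫ t in (0:ℝ)..1, Complex.log (1 - z * t) / t

open MeasureTheory Set

/-- If `P(x) = ∏_{j=1}^d (x - α_j)` is a monic real polynomial of degree `d ≥ 1` with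
`P(0) = 1` and no zeros on `[0,1]`, then `∫₀^∞ log P(e^{-x}) dx = -∑_j Li₂(1/α_j)`. -/
theorem integral_log_polynomial (d : ℕ) (hd : 1 ≤ d) (P : Polynomial ℝ) (α : Fin d → ℂ)
    (hfact : Polynomial.map (algebraMap ℝ ℂ) P = ∏ j, (Polynomial.X - Polynomial.C (α j)))
    (hP0 : P.eval 0 = 1)
    (hzero : ∀ t ∈ Set.Icc (0:ℝ) 1, P.eval t ≠ 0) :
    ((∫ x in Set.Ioi (0:ℝ), Real.log (P.eval (Real.exp (-x)))) : ℂ) =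
      -∑ j, dilogC (1 / α j) := by
  classical
  have hevalR : ∀ r : ℝ, ((P.eval r : ℝ) : ℂ) = ∏ j, ((r : ℂ) - α j) := by
    intro r
    have h1 : (Polynomial.map (algebraMap ℝ ℂ) P).eval ((r : ℝ) : ℂ) = ((P.eval r : ℝ) : ℂ) := by
      rw [Polynomial.eval_map, show ((r : ℝ) : ℂ) = algebraMap ℝ ℂ r from rfl,
        Polynomial.eval₂_at_apply]
      rfl
    rw [← h1, hfact, Polynomial.eval_prod]
    simp
  have hprod0 : ∏ j, (-(α j)) = (1 : ℂ) := by
    have h := hevalR 0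
    rw [hP0] at h
    simpa using h.symm
  have hα0 : ∀ j, α j ≠ 0 := by
    intro j hj
    have h0 : (1 : ℂ) = 0 := by
      rw [← hprod0]
      exact Finset.prod_eq_zero (Finset.mem_univ j) (by simp [hj])
    exact one_ne_zero h0
  -- the factors lie in the slit plane
  have hslit : ∀ (j : Fin d) (t : ℝ), t ∈ Set.Icc (0:ℝ) 1 →
      (1 - (t:ℂ)/α j) ∈ Complex.slitPlane := by
    intro j t ht
    by_contra hmem
    rw [Complex.mem_slitPlane_iff] at hmem
    push_neg at hmem
    obtain ⟨hre, him⟩ := hmem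
    set w : ℂ := (t:ℂ)/α j with hw
    have hwim : w.im = 0 := by
      have h1 : (1 - w).im = 0 := him
      simpa using h1
    have hwre : 1 ≤ w.re := by
      have h1 : (1 - w).re ≤ 0 := hre
      simp only [Complex.sub_re, Complex.one_re] at h1
      linarith
    have hwr : w = ((w.re : ℝ) : ℂ) := Complex.ext rfl (by simp [hwim])
    have hwre0 : w.re ≠ 0 := by linarith
    have h1 : ((w.re : ℝ):ℂ) * α j = (t:ℂ) := by
      rw [← hwr]; exact div_mul_cancel₀ _ (hα0 j)
    have hαj : α j = ((t / w.re : ℝ) : ℂ) := by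
      rw [Complex.ofReal_div, eq_div_iff (by exact_mod_cast hwre0), ← h1]
      ring
    have hs : t / w.re ∈ Set.Icc (0:ℝ) 1 := by
      constructor
      · exact div_nonneg ht.1 (by linarith)
      · calc t / w.re ≤ t := div_le_self ht.1 hwre
          _ ≤ 1 := ht.2
    have hPs : P.eval (t / w.re) = 0 := by
      have h2 : ((P.eval (t / w.re) : ℝ):ℂ) = 0 := by
        rw [hevalR]
        exact Finset.prod_eq_zero (Finset.mem_univ j) (by rw [hαj, sub_self])
      exact_mod_cast h2
    exact hzero _ hs hPs
  have hne : ∀ (j : Fin d) (t : ℝ), t ∈ Set.Icc (0:ℝ) 1 → (1 - (t:ℂ)/α j) ≠ 0 :=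
    fun j t ht => Complex.slitPlane_ne_zero (hslit j t ht)
  -- product factorization
  have hfactor : ∀ t : ℝ, ((P.eval t : ℝ):ℂ) = ∏ j, (1 - (t:ℂ)/α j) := by
    intro t
    have h6 : ∏ j, ((t:ℂ) - α j) = (∏ j, (-(α j))) * ∏ j, (1 - (t:ℂ)/α j) := by
      rw [← Finset.prod_mul_distrib]
      refine Finset.prod_congr rfl fun j _ => ?_
      field_simp [hα0 j]
      ring
    rw [hevalR t, h6, hprod0, one_mul]
  -- conjugation symmetry of the multiset of roots
  have hconjmap : Polynomial.map (starRingEnd ℂ) (Polynomial.map (algebraMap ℝ ℂ) P)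
      = Polynomial.map (algebraMap ℝ ℂ) P := by
    rw [Polynomial.map_map]
    congr 1
    ext r
    simp [Complex.conj_ofReal]
  have hprodconj : (∏ j, (Polynomial.X - Polynomial.C ((starRingEnd ℂ) (α j))))
      = ∏ j, (Polynomial.X - Polynomial.C (α j)) := by
    have h1 : Polynomial.map (starRingEnd ℂ) (∏ j, (Polynomial.X - Polynomial.C (α j)))
        = ∏ j, (Polynomial.X - Polynomial.C ((starRingEnd ℂ) (α j))) := by
      rw [Polynomial.map_prod]
      simp
    rw [← h1, ← hfact, hconjmap, hfact]
  have hmultiset : Multiset.map (fun j => (starRingEnd ℂ) (α j)) Finset.univ.val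
      = Multiset.map α Finset.univ.val := by
    have h2 : ∀ g : Fin d → ℂ, (∏ j, (Polynomial.X - Polynomial.C (g j))).roots
        = Multiset.map g Finset.univ.val := by
      intro g
      rw [Finset.prod_eq_multiset_prod]
      have h3 := Polynomial.roots_multiset_prod_X_sub_C (Multiset.map g Finset.univ.val)
      rw [Multiset.map_map] at h3
      exact h3
    have h4 := congrArg Polynomial.roots hprodconj
    rwa [h2, h2] at h4
  have hsumswap : ∀ f : ℂ → ℝ, ∑ j, f ((starRingEnd ℂ) (α j)) = ∑ j, f (α j) := by
    intro f
    have h5 := congrArg (fun m => (Multiset.map f m).sum) hmultiset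
    simp only [Multiset.map_map, Function.comp_def] at h5
    rw [Finset.sum_eq_multiset_sum, Finset.sum_eq_multiset_sum]
    exact h5
  -- imaginary parts cancel
  have him : ∀ t : ℝ, t ∈ Set.Icc (0:ℝ) 1 →
      ∑ j, (Complex.log (1 - (t:ℂ)/α j)).im = 0 := by
    intro t ht
    have key : ∀ j, (Complex.log (1 - (t:ℂ)/((starRingEnd ℂ) (α j)))).im
        = -(Complex.log (1 - (t:ℂ)/α j)).im := by
      intro j
      have h1 : (1 - (t:ℂ)/((starRingEnd ℂ) (α j))) = (starRingEnd ℂ) (1 - (t:ℂ)/α j) := by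
        simp [map_sub, map_div₀, Complex.conj_ofReal]
      rw [h1, Complex.log_conj _ (Complex.slitPlane_arg_ne_pi (hslit j t ht))]
      simp
    have h2 := hsumswap (fun z => (Complex.log (1 - (t:ℂ)/z)).im)
    simp only [key, Finset.sum_neg_distrib] at h2
    linarith
  -- real parts give the real logarithm
  have hre : ∀ t : ℝ, t ∈ Set.Icc (0:ℝ) 1 →
      Real.log (P.eval t) = ∑ j, (Complex.log (1 - (t:ℂ)/α j)).re := by
    intro t ht
    have h1 : Real.log (P.eval t) = Real.log ‖((P.eval t : ℝ):ℂ)‖ := by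
      rw [Complex.norm_real, Real.norm_eq_abs, Real.log_abs]
    rw [h1, hfactor t, norm_prod,
      Real.log_prod (fun j _ => norm_ne_zero_iff.mpr (hne j t ht))]
    exact Finset.sum_congr rfl fun j _ => (Complex.log_re _).symm
  -- pointwise identity
  have hpt : ∀ t : ℝ, t ∈ Set.Icc (0:ℝ) 1 →
      ((Real.log (P.eval t) : ℝ) : ℂ) = ∑ j, Complex.log (1 - (t:ℂ)/α j) := by
    intro t ht
    apply Complex.ext
    · rw [Complex.ofReal_re, Complex.re_sum]
      exact hre t ht
    · rw [Complex.ofReal_im, Complex.im_sum]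
      exact (him t ht).symm
  -- integrability of each summand on (0,1)
  have hint : ∀ j : Fin d,
      IntegrableOn (fun t : ℝ => Complex.log (1 - (t:ℂ)/α j) / (t:ℂ)) (Set.Ioo 0 1) := by
    intro j
    set F : ℝ → ℂ := fun t => Complex.log (1 - (t:ℂ)/α j) / (t:ℂ) with hF
    set G : ℝ → ℂ := fun t => if t = 0 then -(α j)⁻¹ else F t with hGdef
    have hG : ContinuousOn G (Set.Icc 0 1) := by
      intro t ht
      rcases eq_or_ne t 0 with rfl | ht0
      · have hd : HasDerivAt (fun u : ℝ => Complex.log (1 - (u:ℂ)/α j)) (-(α j)⁻¹) 0 := by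
          have h1 : HasDerivAt (fun u : ℝ => 1 - (u:ℂ)/α j) (-(α j)⁻¹) 0 := by
            have h2 : HasDerivAt (fun u : ℝ => ((u : ℝ):ℂ)) 1 0 := (hasDerivAt_id (0:ℝ)).ofReal_comp
            have h3 := (h2.div_const (α j)).const_sub 1
            simpa [one_div] using h3
          have h4 := h1.clog_real (by simp)
          simpa using h4
        rw [hasDerivAt_iff_tendsto_slope] at hd
        have heq : slope (fun u : ℝ => Complex.log (1 - (u:ℂ)/α j)) 0
            =ᶠ[nhdsWithin 0 {(0:ℝ)}ᶜ] G := by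
          filter_upwards [self_mem_nhdsWithin] with u hu
          have hu0 : (u:ℝ) ≠ 0 := hu
          rw [slope_def_module]
          simp only [hGdef, if_neg hu0, hF, Complex.ofReal_zero, zero_div, sub_zero,
            Complex.log_one]
          rw [Complex.real_smul, Complex.ofReal_inv, inv_mul_eq_div]
        have hGs : Filter.Tendsto G (nhdsWithin 0 {(0:ℝ)}ᶜ) (nhds (-(α j)⁻¹)) :=
          hd.congr' heq
        have h0 : G 0 = -(α j)⁻¹ := by simp [hGdef]
        have hcw : ContinuousWithinAt G (Set.Icc 0 1 \ {0}) 0 := by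
          show Filter.Tendsto G _ (nhds (G 0))
          rw [h0]
          exact hGs.mono_left (nhdsWithin_mono _ (fun x hx => hx.2))
        exact continuousWithinAt_diff_self.mp hcw
      · have hc1 : ContinuousAt (fun u : ℝ => (1 - (u:ℂ)/α j)) t := by
          exact (continuous_const.sub ((Complex.continuous_ofReal.div_const (α j)))).continuousAt
        have hc2 : ContinuousAt (fun u : ℝ => Complex.log (1 - (u:ℂ)/α j)) t :=
          hc1.clog (hslit j t ht)
        have hFc : ContinuousAt F t :=
          hc2.div Complex.continuous_ofReal.continuousAt (by exact_mod_cast ht0)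
        have hev : G =ᶠ[nhds t] F := by
          filter_upwards [isOpen_compl_singleton.mem_nhds ht0] with u hu
          have hu0 : u ≠ 0 := hu
          simp [hGdef, hu0]
        exact (hFc.congr hev.symm).continuousWithinAt
    have hGint : IntegrableOn G (Set.Icc 0 1) := hG.integrableOn_Icc
    exact (hGint.mono_set Set.Ioo_subset_Icc_self).congr_fun
      (fun t ht => by simp [hGdef, if_neg (ne_of_gt ht.1)]) measurableSet_Ioo
  -- change of variables
  have himg : (fun x : ℝ => Real.exp (-x)) '' (Set.Ioi 0) = Set.Ioo 0 1 := by
    ext t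
    constructor
    · rintro ⟨x, hx, rfl⟩
      exact ⟨Real.exp_pos _, Real.exp_lt_one_iff.mpr (neg_lt_zero.mpr hx)⟩
    · intro ht
      exact ⟨-Real.log t, by simpa using Real.log_neg ht.1 ht.2, by simp [Real.exp_log ht.1]⟩
  have hderiv : ∀ x ∈ Set.Ioi (0:ℝ), HasDerivWithinAt (fun x : ℝ => Real.exp (-x))
      (-Real.exp (-x)) (Set.Ioi 0) x := by
    intro x _
    have h1 : HasDerivAt (fun x : ℝ => Real.exp (-x)) (Real.exp (-x) * (-1)) x :=
      (Real.hasDerivAt_exp (-x)).comp x (hasDerivAt_neg x)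
    simpa using h1.hasDerivWithinAt
  have hinj : Set.InjOn (fun x : ℝ => Real.exp (-x)) (Set.Ioi 0) := by
    intro a _ b _ h
    exact neg_injective (Real.exp_injective h)
  have hcov := integral_image_eq_integral_abs_deriv_smul measurableSet_Ioi hderiv hinj
      (fun t => Real.log (P.eval t) / t)
  rw [himg] at hcov
  have hcov2 : (∫ t in Set.Ioo (0:ℝ) 1, Real.log (P.eval t) / t)
      = ∫ x in Set.Ioi (0:ℝ), Real.log (P.eval (Real.exp (-x))) := by
    rw [hcov]
    apply setIntegral_congr_fun measurableSet_Ioi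
    intro x _
    have hx0 : Real.exp (-x) ≠ 0 := (Real.exp_pos _).ne'
    simp only [abs_neg, abs_of_pos (Real.exp_pos (-x)), smul_eq_mul]
    rw [mul_comm, div_mul_cancel₀ _ hx0]
  -- rewrite dilogC as an `Ioo` integral
  have hdilog : ∀ j, dilogC (1 / α j)
      = -∫ t in Set.Ioo (0:ℝ) 1, Complex.log (1 - (t:ℂ)/α j) / (t:ℂ) := by
    intro j
    unfold dilogC
    congr 1
    rw [intervalIntegral.integral_of_le zero_le_one, integral_Ioc_eq_integral_Ioo]
    apply setIntegral_congr_fun measurableSet_Ioo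
    intro t _
    show Complex.log (1 - 1 / α j * (t:ℂ)) / (t:ℂ) = Complex.log (1 - (t:ℂ) / α j) / (t:ℂ)
    rw [one_div_mul_eq_div]
  calc ((∫ x in Set.Ioi (0:ℝ), Real.log (P.eval (Real.exp (-x)))) : ℂ)
      = ((∫ x in Set.Ioi (0:ℝ), Real.log (P.eval (Real.exp (-x))) : ℝ) : ℂ) := integral_ofReal
    _ = ((∫ t in Set.Ioo (0:ℝ) 1, Real.log (P.eval t) / t : ℝ) : ℂ) := by rw [hcov2]
    _ = ∫ t in Set.Ioo (0:ℝ) 1, ((Real.log (P.eval t) / t : ℝ) : ℂ) := integral_ofReal.symm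
    _ = ∑ j, ∫ t in Set.Ioo (0:ℝ) 1, Complex.log (1 - (t:ℂ)/α j) / (t:ℂ) := by
        rw [← integral_finset_sum _ (fun j _ => hint j)]
        apply setIntegral_congr_fun measurableSet_Ioo
        intro t ht
        have ht' : t ∈ Set.Icc (0:ℝ) 1 := Set.Ioo_subset_Icc_self ht
        show ((Real.log (P.eval t) / t : ℝ) : ℂ) = ∑ i, Complex.log (1 - (t:ℂ)/α i) / (t:ℂ)
        rw [Complex.ofReal_div, hpt t ht', Finset.sum_div]
    _ = -∑ j, dilogC (1 / α j) := by
        rw [← Finset.sum_neg_distrib]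
        refine Finset.sum_congr rfl fun j _ => ?_
        rw [hdilog j, neg_neg]
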